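/- Let R be a ring with a ℤ-grading 𝒜 making it a graded ring, and let M, N, P be graded R-modules (with gradings ℳ, 𝒩, 𝒫 respectively). Suppose P is projective as an (ungraded) R-module. Then P satisfies the graded lifting property: for every surjective R-linear map f : M → N that is degree-preserving (f(ℳ(i)) ⊆ 𝒩(i) for all i) and every degree-preserving R-linear map g : P → N (g(𝒫(i)) ⊆ 𝒩(i) for all i), there exists a degree-preserving R-linear map h : P → M (h(𝒫(i)) ⊆ ℳ(i) for all i) such that f ∘ h = g. -/

import Mathlib

set_option maxHeartbeats 1000000
set_option synthInstance.maxHeartbeats 200000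

open DirectSum

/-- Degree-shift of components under homogeneous scalar multiplication. -/
lemma decompose_smul_homog_aux {R M : Type*} [Ring R] [AddCommGroup M] [Module R M]
    (𝒜 : ℤ → AddSubgroup R) (ℳ : ℤ → AddSubgroup M)
    [SetLike.GradedSMul 𝒜 ℳ] [DirectSum.Decomposition ℳ]
    {d : ℤ} {r : R} (hr : r ∈ 𝒜 d) (m : M) (i : ℤ) :
    ((DirectSum.decompose ℳ (r • m) (d + i) : ℳ (d + i)) : M)
      = r • ((DirectSum.decompose ℳ m i : ℳ i) : M) := by
  induction m using DirectSum.Decomposition.inductionOn ℳ with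
  | zero => simp
  | @homogeneous j m =>
    have hmem : r • (m : M) ∈ ℳ (d + j) := by
      have := SetLike.GradedSMul.smul_mem hr m.2
      rwa [vadd_eq_add] at this
    by_cases hij : i = j
    · subst hij
      rw [DirectSum.decompose_of_mem_same ℳ m.2,
        DirectSum.decompose_of_mem_same ℳ hmem]
    · rw [DirectSum.decompose_of_mem_ne ℳ m.2 (Ne.symm hij),
        DirectSum.decompose_of_mem_ne ℳ hmem (by omega : d + j ≠ d + i)]
      simp
  | add a b ha hb =>
    rw [smul_add, DirectSum.decompose_add, DirectSum.decompose_add,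
      DirectSum.add_apply, DirectSum.add_apply, AddSubgroup.coe_add,
      AddSubgroup.coe_add, ha, hb, smul_add]

/-- A degree-preserving linear map commutes with taking degree-`i` components. -/
lemma map_decompose_homog_aux {R M N : Type*} [Ring R]
    [AddCommGroup M] [Module R M] [AddCommGroup N] [Module R N]
    (ℳ : ℤ → AddSubgroup M) [DirectSum.Decomposition ℳ]
    (𝒩 : ℤ → AddSubgroup N) [DirectSum.Decomposition 𝒩]
    (f : M →ₗ[R] N) (hfdeg : ∀ i : ℤ, ∀ m ∈ ℳ i, f m ∈ 𝒩 i) (m : M) (i : ℤ) :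
    f ((DirectSum.decompose ℳ m i : ℳ i) : M)
      = ((DirectSum.decompose 𝒩 (f m) i : 𝒩 i) : N) := by
  induction m using DirectSum.Decomposition.inductionOn ℳ with
  | zero => simp
  | @homogeneous j m =>
    by_cases hij : i = j
    · subst hij
      rw [DirectSum.decompose_of_mem_same ℳ m.2,
        DirectSum.decompose_of_mem_same 𝒩 (hfdeg _ _ m.2)]
    · rw [DirectSum.decompose_of_mem_ne ℳ m.2 (Ne.symm hij),
        DirectSum.decompose_of_mem_ne 𝒩 (hfdeg _ _ m.2) (Ne.symm hij)]
      simp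
  | add a b ha hb =>
    simp only [map_add, DirectSum.decompose_add, DirectSum.add_apply,
      AddSubgroup.coe_add, ha, hb]

/-- Over a `ℤ`-graded ring, a graded module that is projective as an ungraded module
satisfies the graded lifting property: degree-preserving maps to the target of a
degree-preserving surjection lift to degree-preserving maps. -/
theorem graded_lifting_of_projective
    (R : Type*) [Ring R] (𝒜 : ℤ → AddSubgroup R) [GradedRing 𝒜]
    (M N P : Type*)
    [AddCommGroup M] [Module R M] [AddCommGroup N] [Module R N]
    [AddCommGroup P] [Module R P]
    (ℳ : ℤ → AddSubgroup M) [SetLike.GradedSMul 𝒜 ℳ] [DirectSum.Decomposition ℳ]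
    (𝒩 : ℤ → AddSubgroup N) [SetLike.GradedSMul 𝒜 𝒩] [DirectSum.Decomposition 𝒩]
    (𝓟 : ℤ → AddSubgroup P) [SetLike.GradedSMul 𝒜 𝓟] [DirectSum.Decomposition 𝓟]
    (hP : Module.Projective R P)
    (f : M →ₗ[R] N) (hf : Function.Surjective f)
    (hfdeg : ∀ i : ℤ, ∀ m ∈ ℳ i, f m ∈ 𝒩 i)
    (g : P →ₗ[R] N) (hgdeg : ∀ i : ℤ, ∀ x ∈ 𝓟 i, g x ∈ 𝒩 i) :
    ∃ h : P →ₗ[R] M, (∀ i : ℤ, ∀ x ∈ 𝓟 i, h x ∈ ℳ i) ∧ f ∘ₗ h = g := by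
  classical
  obtain ⟨h₀, hh₀⟩ := Module.projective_lifting_property f g hf
  -- componentwise additive maps
  set φ : ∀ i : ℤ, 𝓟 i →+ M := fun i =>
    ((ℳ i).subtype.comp
      ((DFinsupp.evalAddMonoidHom i).comp
        ((DirectSum.decomposeAddEquiv ℳ).toAddMonoidHom.comp
          (h₀.toAddMonoidHom.comp (𝓟 i).subtype)))) with hφ
  set H : P →+ M :=
    (DirectSum.toAddMonoid φ).comp (DirectSum.decomposeAddEquiv 𝓟).toAddMonoidHom with hH
  have H_of : ∀ (i : ℤ) (x : P), x ∈ 𝓟 i →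
      H x = ((DirectSum.decompose ℳ (h₀ x) i : ℳ i) : M) := by
    intro i x hx
    simp only [hH, AddMonoidHom.comp_apply, AddEquiv.coe_toAddMonoidHom,
      DirectSum.decomposeAddEquiv_apply]
    rw [DirectSum.decompose_of_mem 𝓟 hx, DirectSum.toAddMonoid_of]
    rfl
  have H_smul : ∀ (r : R) (x : P), H (r • x) = r • H x := by
    intro r x
    induction r using DirectSum.Decomposition.inductionOn 𝒜 with
    | zero => simp
    | @homogeneous d r =>
      induction x using DirectSum.Decomposition.inductionOn 𝓟 with
      | zero => simp
      | @homogeneous i x =>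
        have hmem : (r : R) • (x : P) ∈ 𝓟 (d + i) := by
          have := SetLike.GradedSMul.smul_mem r.2 x.2
          rwa [vadd_eq_add] at this
        rw [H_of i x x.2, H_of (d + i) ((r : R) • (x : P)) hmem, map_smul,
          decompose_smul_homog_aux 𝒜 ℳ r.2]
      | add a b ha hb => rw [smul_add, map_add, ha, hb, map_add, smul_add]
    | add r s hr hs => rw [add_smul, map_add, hr, hs, add_smul]
  refine ⟨{ toFun := H, map_add' := H.map_add, map_smul' := H_smul }, ?_, ?_⟩
  · intro i x hx
    show H x ∈ ℳ i
    rw [H_of i x hx]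
    exact SetLike.coe_mem _
  · apply LinearMap.ext
    intro x
    induction x using DirectSum.Decomposition.inductionOn 𝓟 with
    | zero => simp
    | @homogeneous i x =>
      show f (H (x : P)) = g (x : P)
      rw [H_of i x x.2, map_decompose_homog_aux ℳ 𝒩 f hfdeg]
      have hfg : f (h₀ (x : P)) = g (x : P) := LinearMap.congr_fun hh₀ (x : P)
      rw [hfg, DirectSum.decompose_of_mem_same 𝒩 (hgdeg i x x.2)]
    | add a b ha hb => simp only [map_add, ha, hb]
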